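/- arXiv:1905.05013 — 6 statements merged into one kernel-verified Lean document; each statement's English description precedes it below -/
import Mathlib

section
/- For states v, w : S, the configuration {w} is reachable from {v} under the reflexive-transitive closure of Step if and only if w is reachable from v under the reflexive-transitive closure of the relation (a, b) ↦ (a ∉ Ster ∧ child a b). In particular, a singleton {v} is reachable from the initial configuration {s₀} in the token game if and only if v is reachable from s₀ by a chain of child steps passing only through non-terminal states. (This establishes the one-to-one correspondence between states of the original game tree and reachable states of the constructed Ludii game used in the proof of Theorem 1.) -/
/-- The child relation of the game tree: `a` is the parent of `b`, i.e. `f b = a`. -/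
def Child {S : Type*} (s₀ : S) (f : ∀ s : S, s ≠ s₀ → S) (a b : S) : Prop :=
  ∃ h : b ≠ s₀, f b h = a

/-- Total version of the parent function (sending the root to itself). -/
def parentMap {S : Type*} [DecidableEq S] (s₀ : S) (f : ∀ s : S, s ≠ s₀ → S) (s : S) : S :=
  if h : s = s₀ then s₀ else f s h

/-- One step of the constructed Ludii token game: the token is removed from a
non-terminal vertex `v` of the configuration and placed on a child `w` of `v`. -/
def Step {S : Type*} [DecidableEq S] (s₀ : S) (Ster : Set S) (f : ∀ s : S, s ≠ s₀ → S)
    (c c' : Finset S) : Prop :=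
  ∃ v ∈ c, v ∉ Ster ∧ ∃ w, ∃ h : w ≠ s₀, f w h = v ∧ c' = insert w (c.erase v)

/-- Reachability correspondence: `{w}` is reachable from `{v}` in the token game
iff `w` is reachable from `v` by child steps passing only through non-terminal
states. In particular (taking `v = s₀`), a singleton `{v}` is reachable from the
initial configuration iff `v` is reachable from `s₀` through non-terminal states. -/
theorem singleton_reachable_iff {S : Type*} [Fintype S] [DecidableEq S]
    (s₀ : S) (Ster : Set S) (f : ∀ s : S, s ≠ s₀ → S)
    (hroot : ∀ s : S, Relation.ReflTransGen (Child s₀ f) s₀ s)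
    (hterm : ∀ s : S, ∃ n : ℕ, (parentMap s₀ f)^[n] s = s₀)
    (v w : S) :
    Relation.ReflTransGen (Step s₀ Ster f) {v} {w} ↔
      Relation.ReflTransGen (fun a b : S => a ∉ Ster ∧ Child s₀ f a b) v w := by
  have key : ∀ a : S, ∀ c' : Finset S, Step s₀ Ster f {a} c' →
      ∃ b, c' = {b} ∧ (a ∉ Ster ∧ Child s₀ f a b) := by
    rintro a c' ⟨x, hx, hxt, y, h, hf, hc⟩
    rw [Finset.mem_singleton] at hx
    subst hx
    exact ⟨y, by simp [hc], hxt, ⟨h, hf⟩⟩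
  constructor
  · intro hrt
    have : ∀ c, Relation.ReflTransGen (Step s₀ Ster f) {v} c →
        ∃ u, c = {u} ∧ Relation.ReflTransGen (fun a b : S => a ∉ Ster ∧ Child s₀ f a b) v u := by
      intro c hc
      induction hc with
      | refl => exact ⟨v, rfl, Relation.ReflTransGen.refl⟩
      | tail _ hstep ih =>
        obtain ⟨u, rfl, hu⟩ := ih
        obtain ⟨b, rfl, hb⟩ := key u _ hstep
        exact ⟨b, rfl, hu.tail hb⟩
    obtain ⟨u, hu, hv⟩ := this _ hrt
    obtain rfl : w = u := Finset.singleton_injective hu; exact hv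
  · intro hrt
    induction hrt with
    | refl => exact Relation.ReflTransGen.refl
    | tail _ hstep ih =>
      rename_i a b _
      refine ih.tail ⟨a, Finset.mem_singleton_self a, hstep.1, b, hstep.2.1, hstep.2.2, ?_⟩
      simp
end

section
/- If a configuration c is reachable from the initial configuration {s₀} in exactly n steps of the relation Step (i.e., there is a chain c₀ = {s₀}, c₁, …, cₙ = c with Step cᵢ cᵢ₊₁ for all i < n), then c = {v} for a state v whose depth is exactly n. (The token moves strictly down the game tree, one level per move of the constructed Ludii game.) -/
lemma find_succ_of_parent {S : Type*} [DecidableEq S]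
    (s₀ : S) (f : ∀ s : S, s ≠ s₀ → S)
    (hterm : ∀ s : S, ∃ n : ℕ, (parentMap s₀ f)^[n] s = s₀)
    (w v : S) (hw : w ≠ s₀) (hp : parentMap s₀ f w = v) :
    Nat.find (hterm w) = Nat.find (hterm v) + 1 := by
  rw [Nat.find_eq_iff]
  constructor
  · rw [Function.iterate_succ_apply, hp]
    exact Nat.find_spec (hterm v)
  · intro m hm
    cases m with
    | zero => simpa using hw
    | succ j =>
      rw [Function.iterate_succ_apply, hp]
      exact Nat.find_min (hterm v) (by omega)

/-- The token moves strictly down the game tree, one level per move: a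
configuration reached from `{s₀}` in exactly `n` steps is a singleton `{v}` where
the depth of `v` (the number of applications of the parent map needed to reach
`s₀`) is exactly `n`. -/
theorem chain_reaches_depth {S : Type*} [Fintype S] [DecidableEq S]
    (s₀ : S) (Ster : Set S) (f : ∀ s : S, s ≠ s₀ → S)
    (hroot : ∀ s : S, Relation.ReflTransGen (Child s₀ f) s₀ s)
    (hterm : ∀ s : S, ∃ n : ℕ, (parentMap s₀ f)^[n] s = s₀)
    (n : ℕ) (cs : Fin (n + 1) → Finset S)
    (h0 : cs 0 = {s₀})
    (hstep : ∀ i : Fin n, Step s₀ Ster f (cs i.castSucc) (cs i.succ)) :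
    ∃ v : S, cs (Fin.last n) = {v} ∧ Nat.find (hterm v) = n := by
  have key : ∀ i : ℕ, ∀ hi : i ≤ n, ∃ v, cs ⟨i, by omega⟩ = {v} ∧ Nat.find (hterm v) = i := by
    intro i
    induction i with
    | zero =>
      intro _
      refine ⟨s₀, h0, ?_⟩
      rw [Nat.find_eq_zero]
      simp
    | succ j ih =>
      intro hi
      obtain ⟨v, hv, hfind⟩ := ih (by omega)
      obtain ⟨v', hv', _, w, hw, hfw, hc'⟩ := hstep ⟨j, by omega⟩
      have hcast : (⟨j, by omega⟩ : Fin n).castSucc = (⟨j, by omega⟩ : Fin (n+1)) := rfl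
      have hsucc : (⟨j, by omega⟩ : Fin n).succ = (⟨j+1, by omega⟩ : Fin (n+1)) := rfl
      rw [hcast, hv] at hv'
      have hv'' : v' = v := Finset.mem_singleton.mp hv'
      subst hv''
      refine ⟨w, ?_, ?_⟩
      · rw [← hsucc, hc', hcast, hv]
        simp
      · rw [find_succ_of_parent s₀ f hterm w v' hw (by simp [parentMap, hw, hfw]), hfind]
  obtain ⟨v, hv, hf⟩ := key n le_rfl
  exact ⟨v, by simpa [Fin.last] using hv, hf⟩
end

section
/- There is no infinite sequence of configurations c₀ = {s₀}, c₁, c₂, … with Step cᵢ cᵢ₊₁ for all i; moreover, every finite Step-chain starting at the initial configuration {s₀} has length at most Fintype.card S. (Every play of the constructed Ludii token game is finite, as required for it to model a finite game.) -/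
/-- Every play of the constructed token game is finite: there is no infinite
`Step`-sequence starting at `{s₀}`, and every finite `Step`-chain starting at
`{s₀}` has length at most `Fintype.card S`. -/
theorem no_infinite_play {S : Type*} [Fintype S] [DecidableEq S]
    (s₀ : S) (Ster : Set S) (f : ∀ s : S, s ≠ s₀ → S)
    (hroot : ∀ s : S, Relation.ReflTransGen (Child s₀ f) s₀ s)
    (hterm : ∀ s : S, ∃ n : ℕ, (parentMap s₀ f)^[n] s = s₀) :
    (¬ ∃ cs : ℕ → Finset S,
        cs 0 = {s₀} ∧ ∀ i : ℕ, Step s₀ Ster f (cs i) (cs (i + 1))) ∧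
    (∀ (n : ℕ) (cs : Fin (n + 1) → Finset S),
        cs 0 = {s₀} →
        (∀ i : Fin n, Step s₀ Ster f (cs i.castSucc) (cs i.succ)) →
        n ≤ Fintype.card S) := by
  classical
  set p := parentMap s₀ f with hp
  have hd0 : Nat.find (hterm s₀) = 0 := by
    simp [Nat.find_eq_zero]
  have hstep : ∀ (w : S) (h : w ≠ s₀),
      Nat.find (hterm w) = Nat.find (hterm (f w h)) + 1 := by
    intro w h
    have hpw : p w = f w h := by simp [hp, parentMap, h]
    rw [Nat.find_eq_iff]
    constructor
    · rw [Function.iterate_succ_apply, hpw]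
      exact Nat.find_spec (hterm (f w h))
    · intro m hm
      cases m with
      | zero => simpa using h
      | succ k =>
        rw [Function.iterate_succ_apply, hpw]
        exact Nat.find_min (hterm (f w h)) (by omega)
  have hbound : ∀ s : S, Nat.find (hterm s) < Fintype.card S := by
    intro s
    set d := Nat.find (hterm s) with hdef
    have main : ∀ i j : Fin (d + 1), (i : ℕ) < (j : ℕ) →
        p^[(i : ℕ)] s = p^[(j : ℕ)] s → False := by
      intro i j hlt hij
      have hij2 : p^[(d - j) + (j : ℕ)] s = p^[(d - j) + (i : ℕ)] s := by
        rw [Function.iterate_add_apply, Function.iterate_add_apply, hij]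
      have hdj : d - (j : ℕ) + (j : ℕ) = d := by omega
      rw [hdj] at hij2
      have hs0 : p^[(d - j) + (i : ℕ)] s = s₀ := by
        rw [← hij2]; exact Nat.find_spec (hterm s)
      exact Nat.find_min (hterm s) (by omega) hs0
    have hinj : Function.Injective (fun i : Fin (d + 1) => p^[(i : ℕ)] s) := by
      intro i j hij
      simp only at hij
      rcases lt_trichotomy (i : ℕ) (j : ℕ) with h | h | h
      · exact absurd hij (by intro hh; exact main i j h hh)
      · exact Fin.ext h
      · exact absurd hij.symm (by intro hh; exact main j i h hh)
    have := Fintype.card_le_of_injective _ hinj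
    simpa using this
  have hstepSing : ∀ (c c' : Finset S) (t : S), Step s₀ Ster f c c' → c = {t} →
      ∃ t', c' = {t'} ∧ ∃ h : t' ≠ s₀, f t' h = t := by
    rintro c c' t ⟨v, hv, -, w, hw, hfw, rfl⟩ rfl
    simp only [Finset.mem_singleton] at hv
    subst hv
    exact ⟨w, by simp, hw, hfw⟩
  constructor
  · rintro ⟨cs, h0, hs⟩
    have key : ∀ i, ∃ t, cs i = {t} ∧ Nat.find (hterm t) = i := by
      intro i
      induction i with
      | zero => exact ⟨s₀, h0, hd0⟩
      | succ k ih =>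
        obtain ⟨t, hct, hdt⟩ := ih
        obtain ⟨t', hc', h', hf'⟩ := hstepSing _ _ _ (hs k) hct
        exact ⟨t', hc', by rw [hstep t' h', hf', hdt]⟩
    obtain ⟨t, -, hdt⟩ := key (Fintype.card S)
    have := hbound t
    omega
  · intro n cs h0 hs
    have key : ∀ k (hk : k ≤ n), ∃ t, cs ⟨k, by omega⟩ = {t} ∧ Nat.find (hterm t) = k := by
      intro k
      induction k with
      | zero =>
        intro _
        refine ⟨s₀, ?_, hd0⟩
        have : (⟨0, by omega⟩ : Fin (n + 1)) = 0 := rfl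
        rw [this, h0]
      | succ k ih =>
        intro hk
        obtain ⟨t, hct, hdt⟩ := ih (by omega)
        have hstep' := hs ⟨k, by omega⟩
        have e1 : (⟨k, by omega⟩ : Fin n).castSucc = (⟨k, by omega⟩ : Fin (n + 1)) := rfl
        have e2 : (⟨k, by omega⟩ : Fin n).succ = (⟨k + 1, by omega⟩ : Fin (n + 1)) := rfl
        rw [e1, e2] at hstep'
        obtain ⟨t', hc', h', hf'⟩ := hstepSing _ _ _ hstep' hct
        exact ⟨t', hc', by rw [hstep t' h', hf', hdt]⟩
    obtain ⟨t, -, hdt⟩ := key n le_rfl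
    have := hbound t
    omega
end

section
/- A singleton configuration {v} has no Step-successor if and only if v ∈ Ster or v has no children (no state w ≠ s₀ with f w = v). In particular, if Ster is exactly the set of leaves of the tree (states with no children), then a configuration reachable from {s₀} has no Step-successor if and only if its unique token vertex is a terminal state. (Terminal positions of the constructed Ludii token game correspond exactly to terminal states of the original game.) -/
/-- A singleton configuration `{v}` has no `Step`-successor iff `v ∈ Ster` or `v`
has no children. In particular, if `Ster` is exactly the set of leaves, then a
configuration reachable from `{s₀}` has no `Step`-successor iff its unique token
vertex is terminal. -/
theorem no_successor_iff_terminal {S : Type*} [Fintype S] [DecidableEq S]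
    (s₀ : S) (Ster : Set S) (f : ∀ s : S, s ≠ s₀ → S)
    (hroot : ∀ s : S, Relation.ReflTransGen (Child s₀ f) s₀ s)
    (hterm : ∀ s : S, ∃ n : ℕ, (parentMap s₀ f)^[n] s = s₀) :
    (∀ v : S,
      (¬ ∃ c' : Finset S, Step s₀ Ster f {v} c') ↔
        (v ∈ Ster ∨ ¬ ∃ w : S, ∃ h : w ≠ s₀, f w h = v)) ∧
    (Ster = {s : S | ∀ w : S, ¬ Child s₀ f s w} →
      ∀ c : Finset S, Relation.ReflTransGen (Step s₀ Ster f) {s₀} c →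
        ∀ v : S, c = {v} →
          ((¬ ∃ c' : Finset S, Step s₀ Ster f c c') ↔ v ∈ Ster)) := by
  have key : ∀ v : S,
      (¬ ∃ c' : Finset S, Step s₀ Ster f {v} c') ↔
        (v ∈ Ster ∨ ¬ ∃ w : S, ∃ h : w ≠ s₀, f w h = v) := by
    intro v
    constructor
    · intro hno
      by_contra hcon
      push_neg at hcon
      obtain ⟨hvs, w, hw, hfw⟩ := hcon
      exact hno ⟨insert w (({v} : Finset S).erase v), v, Finset.mem_singleton_self v,
        hvs, w, hw, hfw, rfl⟩
    · rintro (hvs | hno) ⟨c', u, hu, hus, w, hw, hfw, _⟩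
      · rw [Finset.mem_singleton] at hu; subst hu; exact hus hvs
      · rw [Finset.mem_singleton] at hu; subst hu; exact hno ⟨w, hw, hfw⟩
  refine ⟨key, ?_⟩
  intro hSter c _ v hc
  subst hc
  rw [key v]
  constructor
  · rintro (h | h)
    · exact h
    · rw [hSter]
      intro w hw
      exact h ⟨w, hw⟩
  · exact Or.inl
end

section
/- Assume Ster is exactly the set of leaves of the tree. Then from every configuration reachable from the initial configuration {s₀}, some configuration {z} with z ∈ Ster is reachable under the reflexive-transitive closure of Step. Hence every Step-chain starting at {s₀} can be extended to a chain ending in a configuration with no Step-successor. (Every partial play of the constructed Ludii token game can be completed to a full trial ending in a terminal state.) -/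
/-- If `Ster` is exactly the set of leaves, then from every configuration
reachable from `{s₀}` some configuration `{z}` with `z ∈ Ster` is reachable;
hence every `Step`-chain starting at `{s₀}` can be extended to one ending in a
configuration with no `Step`-successor. -/
theorem can_reach_terminal {S : Type*} [Fintype S] [DecidableEq S]
    (s₀ : S) (Ster : Set S) (f : ∀ s : S, s ≠ s₀ → S)
    (hroot : ∀ s : S, Relation.ReflTransGen (Child s₀ f) s₀ s)
    (hterm : ∀ s : S, ∃ n : ℕ, (parentMap s₀ f)^[n] s = s₀)
    (hleaf : Ster = {s : S | ∀ w : S, ¬ Child s₀ f s w}) :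
    (∀ c : Finset S, Relation.ReflTransGen (Step s₀ Ster f) {s₀} c →
      ∃ z : S, z ∈ Ster ∧
        Relation.ReflTransGen (Step s₀ Ster f) c ({z} : Finset S)) ∧
    (∀ c : Finset S, Relation.ReflTransGen (Step s₀ Ster f) {s₀} c →
      ∃ c' : Finset S, Relation.ReflTransGen (Step s₀ Ster f) c c' ∧
        ¬ ∃ c'' : Finset S, Step s₀ Ster f c' c'') := by
  classical
  set d : S → ℕ := fun s => Nat.find (hterm s) with hd
  have dspec : ∀ s, (parentMap s₀ f)^[d s] s = s₀ := fun s => Nat.find_spec (hterm s)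
  -- iterates up to depth are injective, so depth is bounded
  have hnorep : ∀ s : S, ∀ i j : ℕ, i < j → j ≤ d s →
      (parentMap s₀ f)^[i] s ≠ (parentMap s₀ f)^[j] s := by
    intro s i j hij hj heq
    have key : (parentMap s₀ f)^[d s - j + i] s = s₀ := by
      have : (parentMap s₀ f)^[d s - j + i] s
          = (parentMap s₀ f)^[d s - j] ((parentMap s₀ f)^[i] s) :=
        Function.iterate_add_apply _ _ _ _
      rw [this, heq, ← Function.iterate_add_apply]
      have : d s - j + j = d s := by omega
      rw [this]; exact dspec s
    exact Nat.find_min (hterm s) (show d s - j + i < d s by omega) key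
  have hdlt : ∀ s, d s < Fintype.card S := by
    intro s
    have hinj : Function.Injective (fun i : Fin (d s + 1) => (parentMap s₀ f)^[(i : ℕ)] s) := by
      intro i j hij
      by_contra hne
      rcases lt_trichotomy (i : ℕ) (j : ℕ) with h | h | h
      · exact hnorep s i j h (by omega) hij
      · exact hne (Fin.ext h)
      · exact hnorep s j i h (by omega) hij.symm
    have := Fintype.card_le_of_injective _ hinj
    simpa using this
  -- depth strictly increases along the child relation
  have hdchild : ∀ v w : S, Child s₀ f v w → d v < d w := by
    intro v w hc
    obtain ⟨hw, hfw⟩ := hc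
    have hdw : d w ≠ 0 := by
      intro h0
      have : (parentMap s₀ f)^[0] w = s₀ := h0 ▸ dspec w
      exact hw this
    have hpm : parentMap s₀ f w = v := by
      rw [parentMap, dif_neg hw, hfw]
    have : (parentMap s₀ f)^[d w - 1] v = s₀ := by
      have h1 : (parentMap s₀ f)^[d w - 1 + 1] w = s₀ := by
        have : d w - 1 + 1 = d w := by omega
        rw [this]; exact dspec w
      rw [Function.iterate_add_apply] at h1
      simpa [hpm] using h1
    have hle : d v ≤ d w - 1 := Nat.find_min' (hterm v) this
    omega
  -- main descent lemma
  have main : ∀ k : ℕ, ∀ v : S, Fintype.card S ≤ d v + k →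
      ∃ z ∈ Ster, Relation.ReflTransGen (Step s₀ Ster f) {v} {z} := by
    intro k
    induction k with
    | zero =>
      intro v hv
      exact absurd (hdlt v) (by omega)
    | succ k ih =>
      intro v hv
      by_cases hvS : v ∈ Ster
      · exact ⟨v, hvS, .refl⟩
      · have hnl : ¬ ∀ w, ¬ Child s₀ f v w := by
          rw [hleaf] at hvS; exact hvS
        push_neg at hnl
        obtain ⟨w, hne, hfw⟩ := hnl
        have hstep : Step s₀ Ster f {v} {w} :=
          ⟨v, Finset.mem_singleton_self v, hvS, w, hne, hfw, by simp⟩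
        have hdw : d v < d w := hdchild v w ⟨hne, hfw⟩
        obtain ⟨z, hz, hr⟩ := ih w (by omega)
        exact ⟨z, hz, .head hstep hr⟩
  -- reachable configurations are singletons
  have hsing : ∀ c : Finset S, Relation.ReflTransGen (Step s₀ Ster f) {s₀} c →
      ∃ v, c = {v} := by
    intro c hc
    induction hc with
    | refl => exact ⟨s₀, rfl⟩
    | tail _ hstep ih =>
      obtain ⟨v, rfl⟩ := ih
      obtain ⟨u, hu, _, w, h, hfw, rfl⟩ := hstep
      rw [Finset.mem_singleton] at hu; subst hu
      exact ⟨w, by simp⟩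
  have part1 : ∀ c : Finset S, Relation.ReflTransGen (Step s₀ Ster f) {s₀} c →
      ∃ z : S, z ∈ Ster ∧ Relation.ReflTransGen (Step s₀ Ster f) c ({z} : Finset S) := by
    intro c hc
    obtain ⟨v, rfl⟩ := hsing c hc
    obtain ⟨z, hz, hr⟩ := main (Fintype.card S) v (by omega)
    exact ⟨z, hz, hr⟩
  refine ⟨part1, ?_⟩
  intro c hc
  obtain ⟨z, hz, hr⟩ := part1 c hc
  refine ⟨{z}, hr, ?_⟩
  rintro ⟨c'', u, hu, huS, -⟩
  rw [Finset.mem_singleton] at hu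
  exact huS (hu ▸ hz)
end

section
/- Assume Ster is exactly the set of leaves of the tree. The map sending a list of states [z₀, …, z_f] to the list of configurations [{z₀}, …, {z_f}] is a length-preserving bijection from the set of plays of the tree game (lists with z₀ = s₀, child zᵢ zᵢ₊₁ for all i < f, and z_f ∈ Ster) onto the set of complete trials of the token game (lists of configurations [c₀, …, c_f] with c₀ = {s₀}, Step cᵢ cᵢ₊₁ for all i < f, and c_f having no Step-successor). (This is the core of Theorem 1: for every line of play of the original finite deterministic perfect-information game there is exactly one equivalent trial of the constructed Ludii game, and conversely.) -/
/-- A play of the tree game: a list `[z₀, …, z_f]` with `z₀ = s₀`, consecutive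
states related by the child relation, and `z_f ∈ Ster`. -/
def IsPlay {S : Type*} (s₀ : S) (Ster : Set S) (f : ∀ s : S, s ≠ s₀ → S)
    (l : List S) : Prop :=
  l.head? = some s₀ ∧ l.Chain' (Child s₀ f) ∧ ∃ z ∈ Ster, l.getLast? = some z

/-- A complete trial of the token game: a list of configurations `[c₀, …, c_f]`
with `c₀ = {s₀}`, consecutive configurations related by `Step`, and `c_f` having
no `Step`-successor. -/
def IsTrial {S : Type*} [DecidableEq S] (s₀ : S) (Ster : Set S)
    (f : ∀ s : S, s ≠ s₀ → S) (L : List (Finset S)) : Prop :=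
  L.head? = some {s₀} ∧ L.Chain' (Step s₀ Ster f) ∧
    ∃ c : Finset S, L.getLast? = some c ∧ ∀ c' : Finset S, ¬ Step s₀ Ster f c c'

section Aux
variable {S : Type*} [DecidableEq S] {s₀ : S} {Ster : Set S} {f : ∀ s : S, s ≠ s₀ → S}

lemma step_singleton {a : S} {c' : Finset S} :
    Step s₀ Ster f {a} c' ↔ a ∉ Ster ∧ ∃ w, Child s₀ f a w ∧ c' = {w} := by
  constructor
  · rintro ⟨v, hv, hvt, w, h, hf, hc⟩
    rw [Finset.mem_singleton] at hv
    subst hv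
    exact ⟨hvt, w, ⟨h, hf⟩, by simpa [Finset.erase_singleton] using hc⟩
  · rintro ⟨ht, w, ⟨h, hf⟩, hc⟩
    exact ⟨a, Finset.mem_singleton_self a, ht, w, h, hf, by
      simpa [Finset.erase_singleton] using hc⟩

lemma noStep_iff (hleaf : Ster = {s : S | ∀ w : S, ¬ Child s₀ f s w}) (z : S) :
    (∀ c' : Finset S, ¬ Step s₀ Ster f {z} c') ↔ z ∈ Ster := by
  constructor
  · intro h
    by_contra hz
    have hz' : ¬ ∀ w : S, ¬ Child s₀ f z w := by
      intro hw; exact hz (hleaf ▸ hw)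
    push_neg at hz'
    obtain ⟨w, hw⟩ := hz'
    exact h {w} (step_singleton.mpr ⟨hz, w, hw, rfl⟩)
  · intro hz c' hs
    exact (step_singleton.mp hs).1 hz

lemma step_sing_sing (hleaf : Ster = {s : S | ∀ w : S, ¬ Child s₀ f s w}) {a b : S} :
    Step s₀ Ster f {a} {b} ↔ Child s₀ f a b := by
  constructor
  · rintro hs
    obtain ⟨-, w, hw, hwb⟩ := step_singleton.mp hs
    have : w = b := Finset.singleton_injective hwb.symm
    exact this ▸ hw
  · intro h
    have ha : a ∉ Ster := by
      rw [hleaf]; intro hm; exact hm b h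
    exact step_singleton.mpr ⟨ha, b, h, rfl⟩

lemma map_trial_iff_play (hleaf : Ster = {s : S | ∀ w : S, ¬ Child s₀ f s w}) (l : List S) :
    IsTrial s₀ Ster f (l.map (fun z : S => ({z} : Finset S))) ↔ IsPlay s₀ Ster f l := by
  unfold IsTrial IsPlay
  simp only [List.Chain']
  rw [List.head?_map, List.isChain_map, List.getLast?_map]
  refine and_congr ?_ (and_congr ?_ ?_)
  · simp [Option.map_eq_some_iff, Finset.singleton_injective.eq_iff, eq_comm]
  · exact ⟨fun h => h.imp fun a b => (step_sing_sing hleaf).mp,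
      fun h => h.imp fun a b => (step_sing_sing hleaf).mpr⟩
  · constructor
    · rintro ⟨c, hc, hnc⟩
      rw [Option.map_eq_some_iff] at hc
      obtain ⟨z, hz, rfl⟩ := hc
      exact ⟨z, (noStep_iff hleaf z).mp hnc, hz⟩
    · rintro ⟨z, hz, hlast⟩
      exact ⟨{z}, by rw [hlast]; rfl, (noStep_iff hleaf z).mpr hz⟩

lemma chain_sing (z : S) (L : List (Finset S))
    (h : List.Chain (Step s₀ Ster f) {z} L) :
    ∃ l : List S, L = l.map (fun z : S => ({z} : Finset S)) := by
  induction L generalizing z with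
  | nil => exact ⟨[], rfl⟩
  | cons c L ih =>
    simp only [List.Chain] at h
    rw [List.chain_cons] at h
    obtain ⟨hs, hchain⟩ := h
    obtain ⟨-, w, -, rfl⟩ := step_singleton.mp hs
    obtain ⟨l, rfl⟩ := ih w hchain
    exact ⟨w :: l, rfl⟩

end Aux


/-- The map `[z₀, …, z_f] ↦ [{z₀}, …, {z_f}]` is a length-preserving bijection
from the plays of the tree game onto the complete trials of the token game. -/
theorem plays_biject_trials {S : Type*} [Fintype S] [DecidableEq S]
    (s₀ : S) (Ster : Set S) (f : ∀ s : S, s ≠ s₀ → S)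
    (hroot : ∀ s : S, Relation.ReflTransGen (Child s₀ f) s₀ s)
    (hterm : ∀ s : S, ∃ n : ℕ, (parentMap s₀ f)^[n] s = s₀)
    (hleaf : Ster = {s : S | ∀ w : S, ¬ Child s₀ f s w}) :
    Set.BijOn (List.map (fun z : S => ({z} : Finset S)))
      {l : List S | IsPlay s₀ Ster f l}
      {L : List (Finset S) | IsTrial s₀ Ster f L} ∧
    ∀ l : List S, (l.map (fun z : S => ({z} : Finset S))).length = l.length := by
  refine ⟨⟨?_, ?_, ?_⟩, fun l => l.length_map _⟩
  · intro l hl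
    exact (map_trial_iff_play hleaf l).mpr hl
  · exact (List.map_injective_iff.mpr Finset.singleton_injective).injOn
  · intro L hL
    obtain ⟨hhead, hchain, hlast⟩ := hL
    match L, hhead with
    | c :: T, hhead =>
      have hc : c = {s₀} := by simpa using hhead
      subst hc
      obtain ⟨l, rfl⟩ := chain_sing s₀ T hchain
      exact ⟨s₀ :: l, (map_trial_iff_play hleaf (s₀ :: l)).mp ⟨hhead, hchain, hlast⟩, rfl⟩
end
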